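/- Fix β ∈ (1,2), an algebraic integer of degree d with conjugates γ_1 = β, γ_2, ..., γ_d, and fix α ∈ ℚ(β) ∩ (0,2-β) and x ∈ ℚ(β) ∩ J_{β,α}. With r^{(n)} ∈ ℤ^d the integer vectors such that (T⁺_{β,α})^n(x) = (q̂q)^{-1} Σ_{k=1}^d r_k^{(n)} β^{-k}, and ρ_i^{(n)} := q^{-1} Σ_{k=1}^d r_k^{(n)} γ_i^{-k}, the following are equivalent: (i) x is eventually periodic under T⁺_{β,α}; (ii) sup over n and i of |ρ_i^{(n)}| is finite; (iii) sup over n and k of |r_k^{(n)}| is finite. -/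

import Mathlib

noncomputable def Tplus (β α : ℝ) (x : ℝ) : ℝ :=
  if x < (1 - α) / β then β * x + α else β * x + α - 1

lemma aux_val_rev {d : ℕ} (k : Fin d) : ((k.rev : ℕ) : ℤ) = (d : ℤ) + (-((k : ℕ) + 1 : ℤ)) := by
  have hk : (k : ℕ) < d := k.isLt
  have : (k.rev : ℕ) = d - ((k : ℕ) + 1) := by
    simp [Fin.val_rev]
  rw [this]
  omega

/-- Uniqueness of integer representations in negative powers of `β`. -/
lemma aux_unique (β : ℝ) (hβ0 : β ≠ 0) (d : ℕ)
    (hd : (minpoly ℚ β).natDegree = d) (a : Fin d → ℤ)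
    (h : ∑ k : Fin d, (a k : ℝ) * β ^ (-((k : ℕ) + 1 : ℤ)) = 0) : a = 0 := by
  have li := linearIndependent_pow (K := ℚ) β
  rw [hd] at li
  have key := Fintype.linearIndependent_iff.mp li (fun j => (a j.rev : ℚ)) ?_
  · funext k
    have h2 := key k.rev
    rw [Fin.rev_rev] at h2
    exact_mod_cast h2
  · have e1 : ∀ k : Fin d, β ^ ((d : ℤ)) * ((a k : ℝ) * β ^ (-((k : ℕ) + 1 : ℤ)))
        = (fun j : Fin d => ((a j.rev : ℚ) : ℝ) * β ^ (j : ℕ)) k.rev := by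
      intro k
      simp only [Fin.rev_rev]
      rw [← zpow_natCast β (k.rev : ℕ), aux_val_rev k, zpow_add₀ hβ0]
      push_cast
      ring
    have e2 : ∑ j : Fin d, ((a j.rev : ℚ) : ℝ) * β ^ (j : ℕ)
        = β ^ ((d : ℤ)) * ∑ k : Fin d, (a k : ℝ) * β ^ (-((k : ℕ) + 1 : ℤ)) := by
      rw [Finset.mul_sum]
      exact (Fintype.sum_bijective Fin.rev Fin.rev_bijective _ _ e1).symm
    have : ∑ j : Fin d, ((a j.rev : ℚ) : ℝ) * β ^ (j : ℕ) = 0 := by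
      rw [e2, h, mul_zero]
    simpa [Rat.smul_def] using this

/-- Equivalence of: eventual periodicity of `x`; boundedness of the conjugate
quantities `ρᵢ⁽ⁿ⁾`; boundedness of the integer vectors `r⁽ⁿ⁾`. -/
theorem tfae_preperiodic_bounded (β : ℝ) (hβ : β ∈ Set.Ioo (1 : ℝ) 2)
    (hint : IsIntegral ℤ β) (d : ℕ) (hd : (minpoly ℚ β).natDegree = d)
    (hd0 : 0 < d) (γ : Fin d → ℂ) (hγinj : Function.Injective γ)
    (hγ0 : γ ⟨0, hd0⟩ = (β : ℂ))
    (hγroot : ∀ i, Polynomial.aeval (γ i) (minpoly ℚ β) = 0)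
    (α x : ℝ) (hα : α ∈ Set.Ioo (0 : ℝ) (2 - β))
    (hxJ : x ∈ Set.Icc (-α / (β - 1)) ((1 - α) / (β - 1)))
    (p : Fin d → ℤ) (q : ℕ) (hq : 0 < q)
    (hx : x = (q : ℝ)⁻¹ * ∑ i : Fin d, (p i : ℝ) * β ^ (i : ℕ))
    (phat : Fin d → ℤ) (qhat : ℕ) (hqhat : 0 < qhat)
    (hαrep : α = (qhat : ℝ)⁻¹ * ∑ i : Fin d, (phat i : ℝ) * β ^ (i : ℕ))
    (r : ℕ → Fin d → ℤ)
    (hr : ∀ n : ℕ, (Tplus β α)^[n] x =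
      ((qhat * q : ℕ) : ℝ)⁻¹ * ∑ k : Fin d, (r n k : ℝ) * β ^ (-((k : ℕ) + 1 : ℤ))) :
    ((∃ m n : ℕ, n < m ∧ (Tplus β α)^[m] x = (Tplus β α)^[n] x) ↔
      (∃ C : ℝ, ∀ (n : ℕ) (i : Fin d),
        ‖(q : ℂ)⁻¹ * ∑ k : Fin d, (r n k : ℂ) * (γ i) ^ (-((k : ℕ) + 1 : ℤ))‖ ≤ C)) ∧
    ((∃ m n : ℕ, n < m ∧ (Tplus β α)^[m] x = (Tplus β α)^[n] x) ↔
      (∃ C : ℝ, ∀ (n : ℕ) (k : Fin d), |r n k| ≤ C)) := by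
  have hβ1 : (1 : ℝ) < β := hβ.1
  have hβ0 : β ≠ 0 := by positivity
  set T := Tplus β α with hT
  -- uniqueness: equal iterates give equal integer vectors
  have huniq : ∀ m n : ℕ, T^[m] x = T^[n] x → r m = r n := by
    intro m n h
    have hc : (((qhat * q : ℕ) : ℝ)) ≠ 0 := by
      have : 0 < qhat * q := Nat.mul_pos hqhat hq
      positivity
    have h2 : ∑ k : Fin d, (r m k : ℝ) * β ^ (-((k : ℕ) + 1 : ℤ))
        = ∑ k : Fin d, (r n k : ℝ) * β ^ (-((k : ℕ) + 1 : ℤ)) := by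
      have := (hr m).symm.trans (h.trans (hr n))
      exact mul_left_cancel₀ (inv_ne_zero hc) this
    have h3 : ∑ k : Fin d, ((r m k - r n k : ℤ) : ℝ) * β ^ (-((k : ℕ) + 1 : ℤ)) = 0 := by
      push_cast
      simp only [sub_mul]
      rw [Finset.sum_sub_distrib, h2, sub_self]
    have h4 := aux_unique β hβ0 d hd _ h3
    funext k
    have := congrFun h4 k
    simpa [sub_eq_zero] using this
  -- equal integer vectors give equal iterates
  have hconv : ∀ m n : ℕ, r m = r n → T^[m] x = T^[n] x := by
    intro m n h
    rw [hr m, hr n, h]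
  -- eventual periodicity implies the orbit vectors take finitely many values
  have hfin : (∃ m n : ℕ, n < m ∧ T^[m] x = T^[n] x) →
      ∃ m : ℕ, 0 < m ∧ ∀ j : ℕ, ∃ j' < m, r j = r j' := by
    rintro ⟨m, n, hnm, hper⟩
    refine ⟨m, by omega, ?_⟩
    intro j
    induction j using Nat.strong_induction_on with
    | _ j ih =>
      rcases lt_or_ge j m with hj | hj
      · exact ⟨j, hj, rfl⟩
      · have h1 : T^[j] x = T^[j - m + n] x := by
          calc T^[j] x = T^[j - m] (T^[m] x) := by
                rw [← Function.iterate_add_apply]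
                congr 1
                omega
          _ = T^[j - m] (T^[n] x) := by rw [hper]
          _ = T^[j - m + n] x := by rw [← Function.iterate_add_apply]
        have hlt : j - m + n < j := by omega
        obtain ⟨j', hj', he⟩ := ih _ hlt
        exact ⟨j', hj', (huniq _ _ h1).trans he⟩
  -- E → B
  have hEB : (∃ m n : ℕ, n < m ∧ T^[m] x = T^[n] x) →
      ∃ C : ℝ, ∀ (n : ℕ) (k : Fin d), |r n k| ≤ C := by
    intro hE
    obtain ⟨m, hm0, hm⟩ := hfin hE
    refine ⟨∑ j ∈ Finset.range m, ∑ k : Fin d, ((|r j k| : ℤ) : ℝ), ?_⟩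
    intro n k
    obtain ⟨j', hj', he⟩ := hm n
    rw [he]
    calc ((|r j' k| : ℤ) : ℝ) ≤ ∑ k : Fin d, ((|r j' k| : ℤ) : ℝ) :=
          Finset.single_le_sum (f := fun k : Fin d => ((|r j' k| : ℤ) : ℝ))
            (fun i _ => Int.cast_nonneg_iff.mpr (abs_nonneg _)) (Finset.mem_univ k)
    _ ≤ ∑ j ∈ Finset.range m, ∑ k : Fin d, ((|r j k| : ℤ) : ℝ) :=
          Finset.single_le_sum (f := fun j => ∑ k : Fin d, ((|r j k| : ℤ) : ℝ))
            (fun i _ => Finset.sum_nonneg fun _ _ => Int.cast_nonneg_iff.mpr (abs_nonneg _))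
            (Finset.mem_range.mpr hj')
  -- B → E (pigeonhole)
  have hBE : (∃ C : ℝ, ∀ (n : ℕ) (k : Fin d), |r n k| ≤ C) →
      ∃ m n : ℕ, n < m ∧ T^[m] x = T^[n] x := by
    rintro ⟨C, hC⟩
    have hmem : ∀ (n : ℕ) (k : Fin d), r n k ∈ Finset.Icc (-(⌈C⌉₊ : ℤ)) (⌈C⌉₊ : ℤ) := by
      intro n k
      have h1 : ((|r n k| : ℤ) : ℝ) ≤ ((⌈C⌉₊ : ℤ) : ℝ) := by
        exact_mod_cast (hC n k).trans (Nat.le_ceil C)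
      have h2 : |r n k| ≤ (⌈C⌉₊ : ℤ) := by exact_mod_cast h1
      rw [Finset.mem_Icc]
      constructor <;> [linarith [neg_abs_le (r n k)]; linarith [le_abs_self (r n k)]]
    let f : ℕ → Fin d → (Finset.Icc (-(⌈C⌉₊ : ℤ)) (⌈C⌉₊ : ℤ)) :=
      fun n k => ⟨r n k, hmem n k⟩
    obtain ⟨a, b, hab, hfab⟩ := Finite.exists_ne_map_eq_of_infinite f
    have hrab : r a = r b := by
      funext k
      have := congrFun hfab k
      exact Subtype.ext_iff.mp this
    rcases lt_or_gt_of_ne hab with h | h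
    · exact ⟨b, a, h, hconv _ _ hrab.symm⟩
    · exact ⟨a, b, h, hconv _ _ hrab⟩
  -- B → P
  have hBP : (∃ C : ℝ, ∀ (n : ℕ) (k : Fin d), |r n k| ≤ C) →
      ∃ C : ℝ, ∀ (n : ℕ) (i : Fin d),
        ‖(q : ℂ)⁻¹ * ∑ k : Fin d, (r n k : ℂ) * (γ i) ^ (-((k : ℕ) + 1 : ℤ))‖ ≤ C := by
    rintro ⟨C, hC⟩
    have hC0 : (0 : ℝ) ≤ C := le_trans (by positivity) (hC 0 ⟨0, hd0⟩)
    set G : ℝ := ∑ i : Fin d, ∑ k : Fin d, ‖(γ i) ^ (-((k : ℕ) + 1 : ℤ))‖ with hG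
    refine ⟨(q : ℝ)⁻¹ * (C * G), ?_⟩
    intro n i
    rw [norm_mul, norm_inv, Complex.norm_natCast]
    apply mul_le_mul_of_nonneg_left _ (by positivity)
    calc ‖∑ k : Fin d, (r n k : ℂ) * (γ i) ^ (-((k : ℕ) + 1 : ℤ))‖
        ≤ ∑ k : Fin d, ‖(r n k : ℂ) * (γ i) ^ (-((k : ℕ) + 1 : ℤ))‖ :=
          norm_sum_le _ _
      _ ≤ ∑ k : Fin d, C * ‖(γ i) ^ (-((k : ℕ) + 1 : ℤ))‖ := by
          apply Finset.sum_le_sum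
          intro k _
          rw [norm_mul]
          apply mul_le_mul_of_nonneg_right _ (norm_nonneg _)
          rw [Complex.norm_intCast]
          exact_mod_cast hC n k
      _ = C * ∑ k : Fin d, ‖(γ i) ^ (-((k : ℕ) + 1 : ℤ))‖ := by
          rw [Finset.mul_sum]
      _ ≤ C * G := by
          apply mul_le_mul_of_nonneg_left _ hC0
          exact Finset.single_le_sum
            (f := fun i => ∑ k : Fin d, ‖(γ i) ^ (-((k : ℕ) + 1 : ℤ))‖)
            (fun _ _ => Finset.sum_nonneg fun _ _ => norm_nonneg _)
            (Finset.mem_univ i)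
  -- P → B (matrix inversion)
  have hPB : (∃ C : ℝ, ∀ (n : ℕ) (i : Fin d),
        ‖(q : ℂ)⁻¹ * ∑ k : Fin d, (r n k : ℂ) * (γ i) ^ (-((k : ℕ) + 1 : ℤ))‖ ≤ C) →
      ∃ C : ℝ, ∀ (n : ℕ) (k : Fin d), |r n k| ≤ C := by
    rintro ⟨C, hC⟩
    have hC0 : (0 : ℝ) ≤ C := le_trans (norm_nonneg _) (hC 0 ⟨0, hd0⟩)
    -- the γ i are nonzero
    have hβQ : IsIntegral ℚ β := hint.tower_top
    have hβne : β ≠ 0 := hβ0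
    have hcoeff : (minpoly ℚ β).coeff 0 ≠ 0 :=
      minpoly.coeff_zero_ne_zero hβQ (by exact_mod_cast hβne)
    have hγne : ∀ i, γ i ≠ 0 := by
      intro i hzero
      have h1 := hγroot i
      rw [hzero, Polynomial.aeval_def, Polynomial.eval₂_at_zero] at h1
      have h2 : (algebraMap ℚ ℂ) ((minpoly ℚ β).coeff 0) = 0 := h1
      rw [map_eq_zero] at h2
      exact hcoeff h2
    set M : Matrix (Fin d) (Fin d) ℂ :=
      Matrix.of fun i k : Fin d => (γ i) ^ (-((k : ℕ) + 1 : ℤ)) with hM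
    have hMfact : M = Matrix.diagonal (fun i => (γ i)⁻¹) *
        Matrix.vandermonde (fun i => (γ i)⁻¹) := by
      ext i k
      rw [Matrix.diagonal_mul]
      simp only [hM, Matrix.of_apply, Matrix.vandermonde]
      rw [show (-((k : ℕ) + 1 : ℤ)) = -(((k : ℕ) + 1 : ℕ) : ℤ) by push_cast; ring,
        zpow_neg, zpow_natCast, ← inv_pow, pow_succ']
    have hdet : IsUnit M.det := by
      rw [hMfact, Matrix.det_mul, Matrix.det_diagonal, Matrix.det_vandermonde]
      apply IsUnit.mul
      · exact (Finset.prod_ne_zero_iff.mpr fun i _ => inv_ne_zero (hγne i)).isUnit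
      · apply isUnit_iff_ne_zero.mpr
        apply Finset.prod_ne_zero_iff.mpr
        intro i _
        apply Finset.prod_ne_zero_iff.mpr
        intro j hj
        rw [Finset.mem_Ioi] at hj
        intro heq
        have : (γ j)⁻¹ = (γ i)⁻¹ := by linear_combination heq
        have : γ j = γ i := by
          rw [← inv_inv (γ j), this, inv_inv]
        exact absurd (hγinj this) (ne_of_gt hj)
    refine ⟨(∑ k : Fin d, ∑ i : Fin d, ‖M⁻¹ k i‖) * ((q : ℝ) * C), ?_⟩
    intro n k
    -- recover r n from the ρ values
    set u : Fin d → ℂ := fun k => (r n k : ℂ) with hu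
    set v : Fin d → ℂ := fun i => (q : ℂ)⁻¹ * ∑ k : Fin d, (r n k : ℂ) * (γ i) ^ (-((k : ℕ) + 1 : ℤ)) with hv
    have hq0 : (q : ℂ) ≠ 0 := by exact_mod_cast hq.ne'
    have hMu : M.mulVec u = fun i => (q : ℂ) * v i := by
      funext i
      rw [Matrix.mulVec, hv]
      simp only [dotProduct, hM, Matrix.of_apply, hu]
      rw [← mul_assoc, mul_inv_cancel₀ hq0, one_mul]
      exact Finset.sum_congr rfl fun k _ => mul_comm _ _
    have hrec : u = M⁻¹.mulVec (fun i => (q : ℂ) * v i) := by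
      rw [← hMu, Matrix.mulVec_mulVec, Matrix.nonsing_inv_mul M hdet, Matrix.one_mulVec]
    have h1 : (r n k : ℂ) = ∑ i : Fin d, M⁻¹ k i * ((q : ℂ) * v i) := by
      have := congrFun hrec k
      rw [hu] at this
      exact this
    have h2 : ((|r n k| : ℤ) : ℝ) = ‖(r n k : ℂ)‖ := by
      rw [Complex.norm_intCast, Int.cast_abs]
    rw [h2, h1]
    calc ‖∑ i : Fin d, M⁻¹ k i * ((q : ℂ) * v i)‖
        ≤ ∑ i : Fin d, ‖M⁻¹ k i * ((q : ℂ) * v i)‖ := norm_sum_le _ _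
      _ ≤ ∑ i : Fin d, ‖M⁻¹ k i‖ * ((q : ℝ) * C) := by
          apply Finset.sum_le_sum
          intro i _
          rw [norm_mul, norm_mul, Complex.norm_natCast]
          apply mul_le_mul_of_nonneg_left _ (norm_nonneg _)
          exact mul_le_mul_of_nonneg_left (hC n i) (by positivity)
      _ = (∑ i : Fin d, ‖M⁻¹ k i‖) * ((q : ℝ) * C) := by
          rw [Finset.sum_mul]
      _ ≤ (∑ k : Fin d, ∑ i : Fin d, ‖M⁻¹ k i‖) * ((q : ℝ) * C) := by
          apply mul_le_mul_of_nonneg_right _ (by positivity)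
          exact Finset.single_le_sum
            (f := fun k => ∑ i : Fin d, ‖M⁻¹ k i‖)
            (fun _ _ => Finset.sum_nonneg fun _ _ => norm_nonneg _)
            (Finset.mem_univ k)
  exact ⟨⟨fun hE => hBP (hEB hE), fun hP => hBE (hPB hP)⟩, ⟨hEB, hBE⟩⟩
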